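/- arXiv:2309.17346 — 9 statements merged into one kernel-verified Lean document; each statement's English description precedes it below -/
import Mathlib

section
/- Every pmf in SB_d with support on exactly two antipodal points {x, 1_d - x}, each with mass 1/2, is an extreme point of the convex polytope SB_d; that is, it cannot be written as a convex combination λ g + (1-λ) h with g, h in SB_d, g ≠ h, and λ in (0,1). -/
open Finset

/-- A pmf on {0,1}^d with all one-dimensional marginals Bernoulli(1/2). -/
def isSB (d : ℕ) (f : (Fin d → Bool) → ℝ) : Prop :=
  (∀ x, 0 ≤ f x) ∧ (∑ x, f x = 1) ∧
    ∀ h : Fin d, ∑ x ∈ univ.filter (fun x => x h = true), f x = 1/2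

lemma sb_antipodal_vals (d : ℕ) (hd : 0 < d) (g : (Fin d → Bool) → ℝ)
    (x : Fin d → Bool) (hg : isSB d g)
    (hsupp : ∀ y, y ≠ x → y ≠ (fun i => !x i) → g y = 0) :
    g x = 1/2 ∧ g (fun i => !x i) = 1/2 := by
  set i : Fin d := ⟨0, hd⟩
  set xc : Fin d → Bool := fun j => !x j with hxcdef
  have hmar := hg.2.2 i
  have htot := hg.2.1
  have hsplit := Finset.sum_filter_add_sum_filter_not univ (fun y => y i = true) g
  rw [htot] at hsplit
  cases hxi : x i with
  | true =>
    have h1 : ∑ y ∈ univ.filter (fun y => y i = true), g y = g x := by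
      refine Finset.sum_eq_single_of_mem x (by simp [hxi]) (fun b hb hbx => ?_)
      by_cases hbc : b = xc
      · subst hbc
        simp only [mem_filter, mem_univ, true_and] at hb
        simp [hxcdef, hxi] at hb
      · exact hsupp b hbx hbc
    have hgx : g x = 1/2 := by rw [← h1]; exact hmar
    have h2 : ∑ y ∈ univ.filter (fun y => ¬ y i = true), g y = g xc := by
      refine Finset.sum_eq_single_of_mem xc (by simp [hxcdef, hxi]) (fun b hb hbc => ?_)
      by_cases hbx : b = x
      · subst hbx
        simp only [mem_filter, mem_univ, true_and] at hb
        simp [hxi] at hb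
      · exact hsupp b hbx hbc
    refine ⟨hgx, ?_⟩
    have : g xc = 1 - 1/2 := by rw [← h2]; linarith [hsplit, hmar]
    simpa [hxcdef] using this.trans (by norm_num)
  | false =>
    have h1 : ∑ y ∈ univ.filter (fun y => y i = true), g y = g xc := by
      refine Finset.sum_eq_single_of_mem xc (by simp [hxcdef, hxi]) (fun b hb hbc => ?_)
      by_cases hbx : b = x
      · subst hbx
        simp only [mem_filter, mem_univ, true_and] at hb
        simp [hxi] at hb
      · exact hsupp b hbx hbc
    have hgxc : g xc = 1/2 := by rw [← h1]; exact hmar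
    have h2 : ∑ y ∈ univ.filter (fun y => ¬ y i = true), g y = g x := by
      refine Finset.sum_eq_single_of_mem x (by simp [hxi]) (fun b hb hbx => ?_)
      by_cases hbc : b = xc
      · subst hbc
        simp only [mem_filter, mem_univ, true_and] at hb
        simp [hxcdef, hxi] at hb
      · exact hsupp b hbx hbc
    have hgx : g x = 1 - 1/2 := by rw [← h2]; linarith [hsplit, hmar]
    exact ⟨by linarith, hgxc⟩

/-- a pmf in SB_d supported on exactly two antipodal points, each with
mass 1/2, is an extreme point of the convex polytope SB_d. -/
theorem stmt_2 (d : ℕ) (f : (Fin d → Bool) → ℝ) (x : Fin d → Bool)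
    (hSB : isSB d f)
    (hx : f x = 1/2) (hxc : f (fun i => !x i) = 1/2)
    (h0 : ∀ y, y ≠ x → y ≠ (fun i => !x i) → f y = 0) :
    ¬ ∃ (g h : (Fin d → Bool) → ℝ) (l : ℝ), isSB d g ∧ isSB d h ∧ g ≠ h ∧
        0 < l ∧ l < 1 ∧ ∀ y, f y = l * g y + (1 - l) * h y := by
  rintro ⟨g, h, l, hg, hh, hne, hl0, hl1, heq⟩
  rcases Nat.eq_zero_or_pos d with hd | hd
  · subst hd
    have hall : ∀ y : Fin 0 → Bool, y = x := fun y => funext fun i => i.elim0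
    have : ∑ y, f y = f x :=
      Finset.sum_eq_single_of_mem x (mem_univ x) (fun b _ hb => absurd (hall b) hb)
    rw [hSB.2.1, hx] at this
    norm_num at this
  · have hsg : ∀ y, y ≠ x → y ≠ (fun i => !x i) → g y = 0 := by
      intro y h1 h2
      have := heq y
      rw [h0 y h1 h2] at this
      nlinarith [hg.1 y, hh.1 y]
    have hsh : ∀ y, y ≠ x → y ≠ (fun i => !x i) → h y = 0 := by
      intro y h1 h2
      have := heq y
      rw [h0 y h1 h2] at this
      nlinarith [hg.1 y, hh.1 y]
    obtain ⟨hgx, hgxc⟩ := sb_antipodal_vals d hd g x hg hsg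
    obtain ⟨hhx, hhxc⟩ := sb_antipodal_vals d hd h x hh hsh
    apply hne
    funext y
    by_cases h1 : y = x
    · subst h1; rw [hgx, hhx]
    by_cases h2 : y = (fun i => !x i)
    · subst h2; rw [hgxc, hhxc]
    · rw [hsg y h1 h2, hsh y h1 h2]
end

section
/- Let X = (X_1,...,X_d) be a random vector with pmf in SB_d such that the sum S = X_1 + ... + X_d is minimal in convex order within SB_d. Then the support of the pmf of X is contained in the set of binary vectors x with sum of components equal to d/2 if d is even, or equal to (d-1)/2 or (d+1)/2 if d is odd. -/
open Finset

/-- Number of ones (sum of the components) of a binary vector. -/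
def sumC {d : ℕ} (x : Fin d → Bool) : ℕ :=
  (univ.filter (fun i => x i = true)).card

/-- f is a Σ_cx-smallest element of SB_d: the sum of the components is minimal in
convex order over the class. -/
def SigmaCxSmallest (d : ℕ) (f : (Fin d → Bool) → ℝ) : Prop :=
  isSB d f ∧ ∀ g, isSB d g → ∀ φ : ℝ → ℝ, ConvexOn ℝ Set.univ φ →
    ∑ x, f x * φ (sumC x) ≤ ∑ x, g x * φ (sumC x)

lemma sumC_not {d : ℕ} (x : Fin d → Bool) : sumC (fun i => !(x i)) = d - sumC x := by
  unfold sumC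
  have h : (univ.filter fun i => (!x i) = true) = univ \ (univ.filter fun i => x i = true) := by
    rw [← Finset.filter_not]
    apply Finset.filter_congr
    intro i _
    simp
  rw [h, Finset.card_sdiff_of_subset (Finset.filter_subset _ _)]
  simp

lemma card_lt_val {d k : ℕ} (h : k ≤ d) :
    (univ.filter (fun i : Fin d => i.val < k)).card = k := by
  have hm : (univ.filter (fun i : Fin d => i.val < k)).map Fin.valEmbedding = Finset.range k := by
    ext a
    simp only [Finset.mem_map, Finset.mem_filter, Finset.mem_univ, true_and, Finset.mem_range,
      Fin.valEmbedding_apply]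
    constructor
    · rintro ⟨i, hi, rfl⟩; exact hi
    · intro ha; exact ⟨⟨a, lt_of_lt_of_le ha h⟩, ha, rfl⟩
  have := congrArg Finset.card hm
  simpa using this

/-- the support of a Σ_cx-smallest pmf in SB_d is contained in the set of
binary vectors whose components sum to d/2 (d even) or (d-1)/2 or (d+1)/2 (d odd). -/
theorem stmt_3 (d : ℕ) (f : (Fin d → Bool) → ℝ) (hf : SigmaCxSmallest d f) :
    ∀ x, f x ≠ 0 →
      (Even d → sumC x = d / 2) ∧
      (Odd d → sumC x = (d - 1) / 2 ∨ sumC x = (d + 1) / 2) := by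
  obtain ⟨⟨hf0, hf1, _⟩, hmin⟩ := hf
  rcases Nat.eq_zero_or_pos d with rfl | hd
  · intro x _
    refine ⟨fun _ => ?_, fun hodd => absurd hodd (by decide)⟩
    simp [sumC]
  set k := (d + 1) / 2 with hk
  have hkd : k ≤ d := by omega
  have hk1 : 1 ≤ k := by omega
  set x0 : Fin d → Bool := fun i => decide (i.val < k) with hx0
  set x1 : Fin d → Bool := fun i => !(x0 i) with hx1
  have hne : x0 ≠ x1 := by
    intro h
    have h0 := congrFun h ⟨0, hd⟩
    rw [hx1] at h0
    simp only [hx0] at h0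
    have : (0:ℕ) < k := hk1
    simp [this] at h0
  set g : (Fin d → Bool) → ℝ :=
    fun x => (1/2) * (if x = x0 then 1 else 0) + (1/2) * (if x = x1 then 1 else 0) with hg
  have hsum0 : sumC x0 = k := by
    unfold sumC
    rw [hx0]
    simpa using card_lt_val hkd
  have hsum1 : sumC x1 = d - k := by
    rw [hx1, sumC_not, hsum0]
  have hgSB : isSB d g := by
    refine ⟨?_, ?_, ?_⟩
    · intro x
      rw [hg]
      positivity
    · rw [hg]
      rw [Finset.sum_add_distrib, ← Finset.mul_sum, ← Finset.mul_sum]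
      rw [Finset.sum_ite_eq' univ x0 (fun _ => (1:ℝ)),
        Finset.sum_ite_eq' univ x1 (fun _ => (1:ℝ))]
      norm_num
    · intro h
      rw [hg]
      rw [Finset.sum_add_distrib, ← Finset.mul_sum, ← Finset.mul_sum]
      rw [Finset.sum_ite_eq' _ x0 (fun _ => (1:ℝ)),
        Finset.sum_ite_eq' _ x1 (fun _ => (1:ℝ))]
      simp only [Finset.mem_filter, Finset.mem_univ, true_and]
      rw [hx1]
      cases hb : x0 h <;> simp [hb] <;> norm_num
  set φ : ℝ → ℝ := fun t => |2*t - d| with hφdef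
  have hφ : ConvexOn ℝ Set.univ φ := by
    have h := (convexOn_univ_norm (E := ℝ)).comp_affineMap
      ((2:ℝ) • AffineMap.id ℝ ℝ - AffineMap.const ℝ ℝ (d:ℝ))
    have he : (norm ∘ ⇑((2:ℝ) • AffineMap.id ℝ ℝ - AffineMap.const ℝ ℝ (d:ℝ))) = φ := by
      funext t; simp [hφdef, Real.norm_eq_abs, mul_comm]
    rw [Set.preimage_univ, he] at h
    exact h
  set m : ℝ := ((d % 2 : ℕ) : ℝ) with hm
  have hφ0 : φ (sumC x0) = m := by
    rw [hsum0, hφdef, hm]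
    have h2k : 2 * k = d + d % 2 := by omega
    have h2k' : 2 * (k:ℝ) = (d:ℝ) + ((d % 2 : ℕ):ℝ) := by exact_mod_cast h2k
    have heq : 2 * (k:ℝ) - d = ((d % 2 : ℕ) : ℝ) := by linarith
    simp only [heq]
    exact abs_of_nonneg (by positivity)
  have hφ1 : φ (sumC x1) = m := by
    rw [hsum1, hφdef, hm]
    have h2k : 2 * (d - k) + d % 2 = d := by omega
    have h2k' : 2 * ((d - k : ℕ):ℝ) + ((d % 2 : ℕ):ℝ) = (d:ℝ) := by exact_mod_cast h2k
    have heq : 2 * ((d - k : ℕ):ℝ) - d = -((d % 2 : ℕ) : ℝ) := by linarith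
    simp only [heq]
    rw [abs_neg]
    exact abs_of_nonneg (by positivity)
  have hRHS : ∑ x, g x * φ (sumC x) = m := by
    have hterm : ∀ x : Fin d → Bool,
        g x * φ (sumC x)
        = (if x = x0 then (1/2) * φ (sumC x0) else 0)
          + (if x = x1 then (1/2) * φ (sumC x1) else 0) := by
      intro x
      rw [hg]
      by_cases h0 : x = x0 <;> by_cases h1 : x = x1
      · exact absurd (h0 ▸ h1) hne
      · subst h0; simp [h1]
      · subst h1; simp [h0]
      · simp [h0, h1]
    rw [Finset.sum_congr rfl (fun x _ => hterm x), Finset.sum_add_distrib,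
      Finset.sum_ite_eq' univ x0, Finset.sum_ite_eq' univ x1]
    simp [hφ0, hφ1]
    ring
  have hlb : ∀ s : ℕ, m ≤ φ s := by
    intro s
    rw [hφdef, hm]
    by_cases hp : d % 2 = 0
    · simp only [hp]
      simpa using abs_nonneg (2 * (s:ℝ) - d)
    · have hp1 : d % 2 = 1 := by omega
      rw [hp1]
      have hz : (2 * (s:ℤ) - d) ≠ 0 := by omega
      have h1 : (1:ℤ) ≤ |2 * (s:ℤ) - d| := Int.one_le_abs hz
      have h2 : ((1:ℤ):ℝ) ≤ ((|2 * (s:ℤ) - d| : ℤ) : ℝ) := Int.cast_le.2 h1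
      push_cast at h2
      simpa using h2
  have hLHS : m ≤ ∑ x, f x * φ (sumC x) := by
    calc m = ∑ x, f x * m := by rw [← Finset.sum_mul, hf1, one_mul]
    _ ≤ ∑ x, f x * φ (sumC x) :=
      Finset.sum_le_sum fun x _ => mul_le_mul_of_nonneg_left (hlb _) (hf0 x)
  have heq : ∑ x, f x * φ (sumC x) = m :=
    le_antisymm (le_of_le_of_eq (hmin g hgSB φ hφ) hRHS) hLHS
  have hzero : ∀ x ∈ univ, f x * (φ (sumC x) - m) = 0 := by
    have hs : ∑ x, f x * (φ (sumC x) - m) = 0 := by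
      have : ∑ x, f x * (φ (sumC x) - m)
          = (∑ x, f x * φ (sumC x)) - (∑ x, f x) * m := by
        rw [Finset.sum_mul, ← Finset.sum_sub_distrib]
        exact Finset.sum_congr rfl fun x _ => by ring
      rw [this, heq, hf1]; ring
    exact (Finset.sum_eq_zero_iff_of_nonneg
      (fun x _ => mul_nonneg (hf0 x) (sub_nonneg.2 (hlb _)))).1 hs
  intro x hx
  have hφx : φ (sumC x) = m := by
    have := hzero x (Finset.mem_univ x)
    rcases mul_eq_zero.1 this with h | h
    · exact absurd h hx
    · linarith [sub_eq_zero.1 h]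
  set s := sumC x with hs
  rw [hφdef, hm] at hφx
  constructor
  · intro heven
    have hp : d % 2 = 0 := Nat.even_iff.1 heven
    rw [hp] at hφx
    have h2 : 2 * (s:ℝ) = d := by
      have h0 : |2 * (s:ℝ) - d| = 0 := by simpa using hφx
      have := abs_eq_zero.1 h0
      linarith
    have : 2 * s = d := by exact_mod_cast h2
    omega
  · intro hodd
    have hp : d % 2 = 1 := Nat.odd_iff.1 hodd
    rw [hp] at hφx
    have hφx' : |2 * (s:ℝ) - d| = 1 := by simpa using hφx
    rcases (abs_eq (by norm_num : (0:ℝ) ≤ 1)).1 hφx' with h | h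
    · right
      have h2 : 2 * (s:ℝ) = d + 1 := by linarith
      have : 2 * s = d + 1 := by exact_mod_cast h2
      omega
    · left
      have h2 : 2 * (s:ℝ) + 1 = d := by linarith
      have : 2 * s + 1 = d := by exact_mod_cast h2
      omega
end

section
/- If d is even, a random vector X with pmf in SB_d is a Σ_cx-smallest element of SB_d if and only if P(X_1 + ... + X_d = d/2) = 1 (i.e., X is a joint mix with center d/2). -/
open Finset

lemma sumC_cast {d : ℕ} (x : Fin d → Bool) :
    (sumC x : ℝ) = ∑ i, (if x i = true then (1:ℝ) else 0) := by
  rw [sumC, Finset.card_filter]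
  push_cast
  rfl

lemma mean_eq {d : ℕ} {g : (Fin d → Bool) → ℝ} (hg : isSB d g) :
    ∑ x, g x * (sumC x : ℝ) = d / 2 := by
  obtain ⟨h0, h1, hm⟩ := hg
  calc ∑ x, g x * (sumC x : ℝ)
      = ∑ x, ∑ i, (if x i = true then g x else 0) := by
        refine Finset.sum_congr rfl fun x _ => ?_
        rw [sumC_cast, Finset.mul_sum]
        exact Finset.sum_congr rfl fun i _ => by split <;> simp
    _ = ∑ i, ∑ x, (if x i = true then g x else 0) := Finset.sum_comm
    _ = ∑ i : Fin d, (1/2 : ℝ) := by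
        refine Finset.sum_congr rfl fun i _ => ?_
        rw [← hm i, Finset.sum_filter]
    _ = d / 2 := by simp; ring

/-- the joint mix: uniform on x0 and its complement. -/
noncomputable def jm (d : ℕ) : (Fin d → Bool) → ℝ :=
  fun x => (if x = (fun i : Fin d => decide (i.val < d / 2)) then (1/2 : ℝ) else 0)
    + (if x = (fun i : Fin d => decide (¬ i.val < d / 2)) then (1/2 : ℝ) else 0)

lemma jm_isSB (d : ℕ) (hd : Even d) (hd0 : 0 < d) : isSB d (jm d) := by
  have hne : (fun i : Fin d => decide (i.val < d / 2)) ≠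
      (fun i : Fin d => decide (¬ i.val < d / 2)) := by
    intro h
    have := congrFun h ⟨0, hd0⟩
    have h2 : 0 < d / 2 := by obtain ⟨k, hk⟩ := hd; omega
    simp [h2] at this
  refine ⟨fun x => by unfold jm; positivity, ?_, ?_⟩
  · unfold jm
    rw [Finset.sum_add_distrib, Finset.sum_ite_eq' , Finset.sum_ite_eq']
    simp
    norm_num
  · intro h
    unfold jm
    rw [Finset.sum_add_distrib, Finset.sum_ite_eq', Finset.sum_ite_eq']
    by_cases hh : h.val < d/2 <;> simp [Finset.mem_filter, hh]

lemma card_filter_val_lt (d k : ℕ) (hk : k ≤ d) :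
    (univ.filter (fun i : Fin d => i.val < k)).card = k := by
  rw [Finset.card_filter, Fin.sum_univ_eq_sum_range (fun n => if n < k then 1 else 0),
    ← Finset.sum_filter]
  have : (Finset.range d).filter (fun n => n < k) = Finset.range (min d k) := by
    simp only [Finset.range_eq_Ico]
    exact Finset.Ico_filter_lt 0 d k
  rw [this]
  simp [Nat.min_eq_right hk]

lemma jm_sumC (d : ℕ) (hd : Even d) {x : Fin d → Bool} (hx : jm d x ≠ 0) :
    sumC x = d / 2 := by
  have hcases : x = (fun i : Fin d => decide (i.val < d / 2)) ∨
      x = (fun i : Fin d => decide (¬ i.val < d / 2)) := by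
    by_contra hc
    push_neg at hc
    simp [jm, hc.1, hc.2] at hx
  have hc1 : sumC (fun i : Fin d => decide (i.val < d / 2)) = d / 2 := by
    rw [sumC]
    have : (univ.filter (fun i : Fin d => decide (i.val < d / 2) = true)).card
        = (univ.filter (fun i : Fin d => i.val < d / 2)).card := by
      congr 1; ext i; simp
    rw [this]
    exact card_filter_val_lt d (d/2) (Nat.div_le_self d 2)
  have hc2 : sumC (fun i : Fin d => decide (¬ i.val < d / 2)) = d / 2 := by
    rw [sumC]
    have : (univ.filter (fun i : Fin d => decide (¬ i.val < d / 2) = true)).card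
        = (univ.filter (fun i : Fin d => ¬ i.val < d / 2)).card := by
      congr 1; ext i; simp
    rw [this, Finset.filter_not, Finset.card_sdiff_of_subset (Finset.filter_subset _ _),
      Finset.card_univ, Fintype.card_fin, card_filter_val_lt d (d/2) (Nat.div_le_self d 2)]
    obtain ⟨k, hk⟩ := hd; omega
  rcases hcases with h | h <;> subst h <;> assumption

/-- if d is even, f in SB_d is Σ_cx-smallest iff the sum of components
equals d/2 with probability one (joint mix with center d/2). -/
theorem stmt_4 (d : ℕ) (hd : Even d) (f : (Fin d → Bool) → ℝ) :
    SigmaCxSmallest d f ↔ (isSB d f ∧ ∀ x, f x ≠ 0 → sumC x = d / 2) := by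
  have hcast : ((d / 2 : ℕ) : ℝ) = (d : ℝ) / 2 := by
    obtain ⟨k, hk⟩ := hd; subst hk
    have h2 : (k + k) / 2 = k := by omega
    rw [h2]; push_cast; ring
  constructor
  · rintro ⟨hf, hmin⟩
    refine ⟨hf, ?_⟩
    rcases Nat.eq_zero_or_pos d with hd0 | hd0
    · subst hd0; intro x _; simp [sumC]
    intro x hx
    have hjm := jm_isSB d hd hd0
    have hconv : ConvexOn ℝ Set.univ (fun t : ℝ => |t - (d : ℝ)/2|) := by
      have h := convexOn_univ_norm.comp_affineMap (AffineMap.id ℝ ℝ - AffineMap.const ℝ ℝ ((d:ℝ)/2)) (𝕜 := ℝ) (E := ℝ)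
      simpa [Real.norm_eq_abs, Function.comp_def] using h
    have h := hmin (jm d) hjm _ hconv
    have hrhs : ∑ y, jm d y * |((sumC y : ℝ)) - (d:ℝ)/2| = 0 := by
      refine Finset.sum_eq_zero fun y _ => ?_
      by_cases hy : jm d y = 0
      · simp [hy]
      · rw [jm_sumC d hd hy, hcast]; simp
    have hle : ∑ y, f y * |((sumC y : ℝ)) - (d:ℝ)/2| ≤ 0 := by
      calc _ ≤ ∑ y, jm d y * |((sumC y : ℝ)) - (d:ℝ)/2| := h
        _ = 0 := hrhs
    have hzero : ∀ y ∈ univ, f y * |((sumC y : ℝ)) - (d:ℝ)/2| = 0 := by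
      have hnn : ∀ y ∈ (univ : Finset (Fin d → Bool)),
          0 ≤ f y * |((sumC y : ℝ)) - (d:ℝ)/2| := fun y _ =>
        mul_nonneg (hf.1 y) (abs_nonneg _)
      intro y hy
      exact (Finset.sum_eq_zero_iff_of_nonneg hnn).mp (le_antisymm hle (Finset.sum_nonneg hnn)) y hy
    have := hzero x (Finset.mem_univ x)
    have habs : |((sumC x : ℝ)) - (d:ℝ)/2| = 0 := by
      rcases mul_eq_zero.mp this with h' | h'
      · exact absurd h' hx
      · exact h'
    have : (sumC x : ℝ) = (d:ℝ)/2 := by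
      have := abs_eq_zero.mp habs; linarith
    have : (sumC x : ℝ) = ((d/2 : ℕ) : ℝ) := by rw [hcast]; exact this
    exact_mod_cast this
  · rintro ⟨hf, hsupp⟩
    refine ⟨hf, fun g hg φ hφ => ?_⟩
    have hlhs : ∑ x, f x * φ (sumC x) = φ ((d:ℝ)/2) := by
      have : ∑ x, f x * φ (sumC x) = ∑ x, f x * φ ((d:ℝ)/2) := by
        refine Finset.sum_congr rfl fun x _ => ?_
        by_cases hx : f x = 0
        · simp [hx]
        · rw [hsupp x hx, hcast]
      rw [this, ← Finset.sum_mul, hf.2.1, one_mul]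
    rw [hlhs]
    have hmean : ∑ x, g x * (sumC x : ℝ) = (d:ℝ)/2 := mean_eq hg
    have hj := hφ.map_sum_le (t := univ) (w := g) (p := fun x => (sumC x : ℝ))
      (fun x _ => hg.1 x) hg.2.1 (fun x _ => Set.mem_univ _)
    simp only [smul_eq_mul] at hj
    rw [hmean] at hj
    exact hj
end

section
/- Let X be a Bernoulli random vector in SB_d supported on two antipodal points {x, 1_d - x} with P(X=x)=P(X=1_d - x)=1/2, where the components of x sum to ⌊d/2⌋. Let U be standard uniform independent of X and V = U X + (1-U)(1_d - X). Then for every subset I of {1,...,d}, the pair (Σ_{j∈I} V_j, Σ_{j∉I} V_j) is countermonotonic; i.e., V is Σ-countermonotonic. -/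
open MeasureTheory ProbabilityTheory Finset

lemma sum_eval_aux {d : ℕ} (I : Finset (Fin d)) (u : ℝ) (y : Fin d → ℝ) :
    ∑ j ∈ I, (u * y j + (1 - u) * (1 - y j))
      = u * (∑ j ∈ I, y j) + (1 - u) * ((I.card : ℝ) - ∑ j ∈ I, y j) := by
  rw [Finset.sum_add_distrib, ← Finset.mul_sum, ← Finset.mul_sum,
    Finset.sum_sub_distrib, Finset.sum_const, nsmul_eq_mul, mul_one]

lemma int_key (t : ℤ) : (0 : ℤ) ≤ t * (t + 1) := by
  rcases le_or_gt 0 t with h | h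
  · exact mul_nonneg h (by linarith)
  · nlinarith

lemma key_sign (sI sIc A B k e : ℝ) (t : ℤ)
    (h1 : sI + sIc = k) (h2 : A + B = 2 * k + e) (he : e = 0 ∨ e = 1)
    (ht : (t : ℝ) = 2 * sI - A) :
    (2 * sI - A) * (2 * sIc - B) ≤ 0 := by
  have h3 : 2 * sIc - B = -e - (2 * sI - A) := by linarith
  rw [h3, ← ht]
  have hk : (0 : ℝ) ≤ (t : ℝ) * ((t : ℝ) + 1) := by exact_mod_cast int_key t
  rcases he with rfl | rfl
  · nlinarith [sq_nonneg ((t : ℝ))]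
  · nlinarith

/-- let X be a symmetric Bernoulli random vector supported on two
antipodal points {x, 1_d - x}, each with probability 1/2, where the components of x
sum to ⌊d/2⌋. Let U be standard uniform independent of X and V = U X + (1-U)(1_d - X).
Then for every index set I, the pair (Σ_{j∈I} V_j, Σ_{j∉I} V_j) is countermonotonic
(formulated via independent copies on the product space): V is Σ-countermonotonic. -/
theorem stmt_9 {Ω : Type*} [MeasurableSpace Ω] (μ : Measure Ω) [IsProbabilityMeasure μ]
    (d : ℕ) (X : Ω → Fin d → ℝ) (U : Ω → ℝ) (x : Fin d → ℝ)
    (hmX : Measurable X) (hmU : Measurable U)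
    (hx01 : ∀ j, x j = 0 ∨ x j = 1)
    (hxsum : ∑ j, x j = (d / 2 : ℕ))
    (hXx : μ {ω | X ω = x} = 1/2)
    (hXxc : μ {ω | X ω = fun j => 1 - x j} = 1/2)
    (hU : Measure.map U μ = volume.restrict (Set.Icc (0:ℝ) 1))
    (hInd : IndepFun U X μ) :
    ∀ I : Finset (Fin d),
      (μ.prod μ) {p : Ω × Ω |
        ((∑ j ∈ I, (U p.1 * X p.1 j + (1 - U p.1) * (1 - X p.1 j)))
          - (∑ j ∈ I, (U p.2 * X p.2 j + (1 - U p.2) * (1 - X p.2 j))))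
        * ((∑ j ∈ Iᶜ, (U p.1 * X p.1 j + (1 - U p.1) * (1 - X p.1 j)))
          - (∑ j ∈ Iᶜ, (U p.2 * X p.2 j + (1 - U p.2) * (1 - X p.2 j)))) ≤ 0} = 1 := by
  intro I
  -- d ≠ 0
  rcases Nat.eq_zero_or_pos d with rfl | hd
  · exfalso
    have : {ω | X ω = x} = Set.univ := by
      ext ω; simp [funext_iff, Fin.forall_iff]
    rw [this, measure_univ] at hXx
    have h2 := congrArg ENNReal.toReal hXx
    rw [ENNReal.toReal_div] at h2
    norm_num at h2
  obtain ⟨j0⟩ : Nonempty (Fin d) := ⟨⟨0, hd⟩⟩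
  -- the good event
  set E1 : Set Ω := {ω | X ω = x} with hE1
  set E2 : Set Ω := {ω | X ω = fun j => 1 - x j} with hE2
  have hmE1 : MeasurableSet E1 := hmX (measurableSet_singleton x)
  have hmE2 : MeasurableSet E2 := hmX (measurableSet_singleton _)
  have hdisj : Disjoint E1 E2 := by
    rw [Set.disjoint_left]
    intro ω h1 h2
    have := (h1.symm.trans h2 : x = fun j => 1 - x j)
    have h0 := congrFun this j0
    rcases hx01 j0 with h | h <;> rw [h] at h0 <;> norm_num at h0
  have hG : μ (E1 ∪ E2) = 1 := by
    rw [measure_union hdisj hmE2, hXx, hXxc]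
    exact ENNReal.add_halves 1
  have hGG : (μ.prod μ) ((E1 ∪ E2) ×ˢ (E1 ∪ E2)) = 1 := by
    rw [Measure.prod_prod, hG, one_mul]
  -- global notation
  set sI : ℝ := ∑ j ∈ I, x j with hsI
  set sIc : ℝ := ∑ j ∈ Iᶜ, x j with hsIc
  set A : ℝ := (I.card : ℝ) with hA
  set B : ℝ := ((Iᶜ : Finset (Fin d)).card : ℝ) with hB
  -- sI is a natural number
  set n : ℕ := (I.filter (fun j => x j = 1)).card with hn
  have hsIn : sI = (n : ℝ) := by
    rw [hsI, hn, ← Finset.sum_boole]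
    refine Finset.sum_congr rfl fun j _ => ?_
    rcases hx01 j with h | h <;> simp [h]
  -- cardinality/sum relations
  have hsum_split : sI + sIc = ((d / 2 : ℕ) : ℝ) := by
    rw [hsI, hsIc, Finset.sum_add_sum_compl, hxsum]
  have hcard_split : A + B = 2 * ((d / 2 : ℕ) : ℝ) + ((d % 2 : ℕ) : ℝ) := by
    rw [hA, hB]
    have h1 : I.card + (Iᶜ : Finset (Fin d)).card = d := by
      rw [Finset.card_add_card_compl, Fintype.card_fin]
    have h2 : (d : ℝ) = 2 * ((d / 2 : ℕ) : ℝ) + ((d % 2 : ℕ) : ℝ) := by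
      exact_mod_cast (Nat.div_add_mod d 2).symm
    have h1' : (I.card : ℝ) + ((Iᶜ : Finset (Fin d)).card : ℝ) = (d : ℝ) := by exact_mod_cast h1
    linarith
  have he : ((d % 2 : ℕ) : ℝ) = 0 ∨ ((d % 2 : ℕ) : ℝ) = 1 := by
    rcases Nat.mod_two_eq_zero_or_one d with h | h <;> [left; right] <;> rw [h] <;> norm_num
  have ht : ((2 * (n : ℤ) - I.card : ℤ) : ℝ) = 2 * sI - A := by
    push_cast [hsIn, hA]; ring
  have key : (2 * sI - A) * (2 * sIc - B) ≤ 0 :=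
    key_sign sI sIc A B _ _ _ hsum_split hcard_split he ht
  -- pointwise inequality on the good event
  refine le_antisymm prob_le_one ?_
  rw [← hGG]
  apply measure_mono
  rintro ⟨ω1, ω2⟩ ⟨h1, h2⟩
  simp only [Set.mem_setOf_eq]
  set u : ℝ := U ω1
  set v : ℝ := U ω2
  have ev1x : ∀ (E : Finset (Fin d)) (w : ℝ) (ω : Ω), X ω = x →
      ∑ j ∈ E, (U ω * X ω j + (1 - U ω) * (1 - X ω j))
        = U ω * (∑ j ∈ E, x j) + (1 - U ω) * ((E.card : ℝ) - ∑ j ∈ E, x j) := by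
    intro E w ω hω
    rw [hω, sum_eval_aux]
  have ev1c : ∀ (E : Finset (Fin d)) (ω : Ω), X ω = (fun j => 1 - x j) →
      ∑ j ∈ E, (U ω * X ω j + (1 - U ω) * (1 - X ω j))
        = U ω * ((E.card : ℝ) - ∑ j ∈ E, x j) + (1 - U ω) * (∑ j ∈ E, x j) := by
    intro E ω hω
    rw [hω, sum_eval_aux]
    have h1 : ∑ j ∈ E, (1 - x j) = (E.card : ℝ) - ∑ j ∈ E, x j := by
      rw [Finset.sum_sub_distrib, Finset.sum_const, nsmul_eq_mul, mul_one]
    rw [h1]; ring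
  rcases h1 with hx1 | hx1 <;> rcases h2 with hx2 | hx2
  · rw [ev1x I u ω1 hx1, ev1x I v ω2 hx2, ev1x Iᶜ u ω1 hx1, ev1x Iᶜ v ω2 hx2]
    nlinarith [sq_nonneg (u - v), sq_nonneg (u + v - 1)]
  · rw [ev1x I u ω1 hx1, ev1c I ω2 hx2, ev1x Iᶜ u ω1 hx1, ev1c Iᶜ ω2 hx2]
    nlinarith [sq_nonneg (u - v), sq_nonneg (u + v - 1)]
  · rw [ev1c I ω1 hx1, ev1x I v ω2 hx2, ev1c Iᶜ ω1 hx1, ev1x Iᶜ v ω2 hx2]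
    nlinarith [sq_nonneg (u - v), sq_nonneg (u + v - 1)]
  · rw [ev1c I ω1 hx1, ev1c I ω2 hx2, ev1c Iᶜ ω1 hx1, ev1c Iᶜ ω2 hx2]
    nlinarith [sq_nonneg (u - v), sq_nonneg (u + v - 1)]
end

section
/- Let X and Y be Bernoulli random variables with means p and q respectively, jointly distributed. Then the Pearson correlation of (X,Y) equals Kendall's tau of (X,Y) divided by 2√(p(1-p)q(1-q)). -/
open MeasureTheory ProbabilityTheory

lemma int01 {Ω : Type*} [MeasurableSpace Ω] (μ : Measure Ω) (X : Ω → ℝ)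
    (hmX : Measurable X) (h01 : ∀ ω, X ω = 0 ∨ X ω = 1) :
    ∫ ω, X ω ∂μ = (μ {ω | X ω = 1}).toReal := by
  have hs : MeasurableSet {ω | X ω = 1} := hmX (measurableSet_singleton 1)
  have hX : ∀ ω, X ω = Set.indicator {ω | X ω = 1} (fun _ => (1:ℝ)) ω := by
    intro ω; rcases h01 ω with h | h <;> simp [Set.indicator, h]
  calc ∫ ω, X ω ∂μ = ∫ ω, Set.indicator {ω | X ω = 1} (fun _ => (1:ℝ)) ω ∂μ := by
        simp_rw [← hX]
    _ = (μ {ω | X ω = 1}).toReal := by rw [integral_indicator_const (1:ℝ) hs]; simp; rfl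

/-- for jointly distributed Bernoulli random variables X, Y with means
p, q in (0,1), Pearson's correlation equals Kendall's tau divided by 2√(p(1-p)q(1-q)). -/
theorem stmt_10 {Ω : Type*} [MeasurableSpace Ω] (μ : Measure Ω) [IsProbabilityMeasure μ]
    (X Y : Ω → ℝ) (p q : ℝ)
    (hp : 0 < p) (hp1 : p < 1) (hq : 0 < q) (hq1 : q < 1)
    (hmX : Measurable X) (hmY : Measurable Y)
    (hX01 : ∀ ω, X ω = 0 ∨ X ω = 1) (hY01 : ∀ ω, Y ω = 0 ∨ Y ω = 1)
    (hXp : (μ {ω | X ω = 1}).toReal = p) (hYq : (μ {ω | Y ω = 1}).toReal = q) :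
    ((∫ ω, X ω * Y ω ∂μ) - (∫ ω, X ω ∂μ) * (∫ ω, Y ω ∂μ))
        / Real.sqrt (variance X μ * variance Y μ)
      = (((μ.prod μ) {ω : Ω × Ω | (X ω.1 - X ω.2) * (Y ω.1 - Y ω.2) > 0}).toReal
          - ((μ.prod μ) {ω : Ω × Ω | (X ω.1 - X ω.2) * (Y ω.1 - Y ω.2) < 0}).toReal)
        / (2 * Real.sqrt (p * (1 - p) * q * (1 - q))) := by
  -- the four atoms
  set S11 : Set Ω := {ω | X ω = 1 ∧ Y ω = 1} with hS11
  set S10 : Set Ω := {ω | X ω = 1 ∧ Y ω = 0} with hS10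
  set S01 : Set Ω := {ω | X ω = 0 ∧ Y ω = 1} with hS01
  set S00 : Set Ω := {ω | X ω = 0 ∧ Y ω = 0} with hS00
  have mX1 : MeasurableSet {ω | X ω = 1} := hmX (measurableSet_singleton 1)
  have mX0 : MeasurableSet {ω | X ω = 0} := hmX (measurableSet_singleton 0)
  have mY1 : MeasurableSet {ω | Y ω = 1} := hmY (measurableSet_singleton 1)
  have mY0 : MeasurableSet {ω | Y ω = 0} := hmY (measurableSet_singleton 0)
  have m11 : MeasurableSet S11 := mX1.inter mY1
  have m10 : MeasurableSet S10 := mX1.inter mY0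
  have m01 : MeasurableSet S01 := mX0.inter mY1
  have m00 : MeasurableSet S00 := mX0.inter mY0
  set a := (μ S11).toReal with ha
  set b := (μ S10).toReal with hb
  set c := (μ S01).toReal with hc
  set d := (μ S00).toReal with hd
  have hfin : ∀ s : Set Ω, μ s ≠ ⊤ := fun s => measure_ne_top μ s
  -- marginals
  have hab : a + b = p := by
    have hU : {ω | X ω = 1} = S11 ∪ S10 := by
      ext ω
      rcases hY01 ω with h | h <;> simp [hS11, hS10, h]
    have hdj : Disjoint S11 S10 := by
      rw [Set.disjoint_left]; intro ω h h'
      simp only [hS11, hS10, Set.mem_setOf_eq] at h h'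
      linarith [h.2, h'.2]
    rw [← hXp, hU, measure_union hdj m10, ENNReal.toReal_add (hfin _) (hfin _)]
  have hac : a + c = q := by
    have hU : {ω | Y ω = 1} = S11 ∪ S01 := by
      ext ω
      rcases hX01 ω with h | h <;> simp [hS11, hS01, h] <;> tauto
    have hdj : Disjoint S11 S01 := by
      rw [Set.disjoint_left]; intro ω h h'
      simp only [hS11, hS01, Set.mem_setOf_eq] at h h'
      linarith [h.1, h'.1]
    rw [← hYq, hU, measure_union hdj m01, ENNReal.toReal_add (hfin _) (hfin _)]
  -- total mass
  have hsum : a + b + c + d = 1 := by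
    have hU : S11 ∪ S10 ∪ S01 ∪ S00 = Set.univ := by
      ext ω
      rcases hX01 ω with h | h <;> rcases hY01 ω with h' | h' <;>
        simp [hS11, hS10, hS01, hS00, h, h']
    have hd1 : Disjoint S11 S10 := by
      rw [Set.disjoint_left]; intro ω h h'
      simp only [hS11, hS10, Set.mem_setOf_eq] at h h'
      linarith [h.2, h'.2]
    have hd2 : Disjoint (S11 ∪ S10) S01 := by
      rw [Set.disjoint_left]; intro ω h h'
      simp only [hS11, hS10, hS01, Set.mem_union, Set.mem_setOf_eq] at h h'
      rcases h with h | h <;> linarith [h.1, h'.1]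
    have hd3 : Disjoint (S11 ∪ S10 ∪ S01) S00 := by
      rw [Set.disjoint_left]; intro ω h h'
      simp only [hS11, hS10, hS01, hS00, Set.mem_union, Set.mem_setOf_eq] at h h'
      rcases h with (h | h) | h
      · linarith [h.1, h'.1]
      · linarith [h.2, h'.2]
      · linarith [h.2, h'.2]
    have hmu := measure_univ (μ := μ)
    rw [← hU, measure_union hd3 m00, measure_union hd2 m01, measure_union hd1 m10] at hmu
    rw [ha, hb, hc, hd, ← ENNReal.toReal_add (hfin _) (hfin _),
      ← ENNReal.toReal_add (by finiteness) (hfin _),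
      ← ENNReal.toReal_add (by finiteness) (hfin _), hmu]
    simp
  -- integrals
  have hIX : ∫ ω, X ω ∂μ = p := by rw [int01 μ X hmX hX01, hXp]
  have hIY : ∫ ω, Y ω ∂μ = q := by rw [int01 μ Y hmY hY01, hYq]
  have hIXY : ∫ ω, X ω * Y ω ∂μ = a := by
    rw [int01 μ (fun ω => X ω * Y ω) (hmX.mul hmY) ?_]
    · congr 2
      ext ω
      rcases hX01 ω with h | h <;> rcases hY01 ω with h' | h' <;>
        simp [hS11, h, h']
    · intro ω
      rcases hX01 ω with h | h <;> rcases hY01 ω with h' | h' <;> simp [h, h']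
  -- variances
  have hmem : ∀ (Z : Ω → ℝ), Measurable Z → (∀ ω, Z ω = 0 ∨ Z ω = 1) → MemLp Z 2 μ := by
    intro Z hm h01
    refine MemLp.of_bound hm.aestronglyMeasurable 1 (Filter.Eventually.of_forall fun ω => ?_)
    rcases h01 ω with h | h <;> simp [h]
  have hsq : ∀ (Z : Ω → ℝ), (∀ ω, Z ω = 0 ∨ Z ω = 1) → Z ^ 2 = Z := by
    intro Z h01; funext ω
    rcases h01 ω with h | h <;> simp [Pi.pow_apply, h]
  have hVX : variance X μ = p * (1 - p) := by
    rw [variance_eq_sub (hmem X hmX hX01), hsq X hX01, hIX]; ring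
  have hVY : variance Y μ = q * (1 - q) := by
    rw [variance_eq_sub (hmem Y hmY hY01), hsq Y hY01, hIY]; ring
  -- Kendall sets
  have hPos : {ω : Ω × Ω | (X ω.1 - X ω.2) * (Y ω.1 - Y ω.2) > 0}
      = S11 ×ˢ S00 ∪ S00 ×ˢ S11 := by
    ext ⟨ω₁, ω₂⟩
    rcases hX01 ω₁ with h1 | h1 <;> rcases hX01 ω₂ with h2 | h2 <;>
      rcases hY01 ω₁ with h3 | h3 <;> rcases hY01 ω₂ with h4 | h4 <;>
      simp [hS11, hS00, h1, h2, h3, h4] <;> norm_num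
  have hNeg : {ω : Ω × Ω | (X ω.1 - X ω.2) * (Y ω.1 - Y ω.2) < 0}
      = S10 ×ˢ S01 ∪ S01 ×ˢ S10 := by
    ext ⟨ω₁, ω₂⟩
    rcases hX01 ω₁ with h1 | h1 <;> rcases hX01 ω₂ with h2 | h2 <;>
      rcases hY01 ω₁ with h3 | h3 <;> rcases hY01 ω₂ with h4 | h4 <;>
      simp [hS10, hS01, h1, h2, h3, h4] <;> norm_num
  have hdisj1 : Disjoint (S11 ×ˢ S00) (S00 ×ˢ S11) := Set.disjoint_left.2 (by
    rintro ⟨ω₁, ω₂⟩ ⟨⟨h1, _⟩, _⟩ ⟨⟨h0, _⟩, _⟩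
    rw [h1] at h0; norm_num at h0)
  have hdisj2 : Disjoint (S10 ×ˢ S01) (S01 ×ˢ S10) := Set.disjoint_left.2 (by
    rintro ⟨ω₁, ω₂⟩ ⟨⟨h1, _⟩, _⟩ ⟨⟨h0, _⟩, _⟩
    rw [h1] at h0; norm_num at h0)
  have hPm : ((μ.prod μ) {ω : Ω × Ω | (X ω.1 - X ω.2) * (Y ω.1 - Y ω.2) > 0}).toReal
      = 2 * (a * d) := by
    rw [hPos, measure_union hdisj1 (m00.prod m11), Measure.prod_prod, Measure.prod_prod,
      ENNReal.toReal_add (by finiteness) (by finiteness), ENNReal.toReal_mul,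
      ENNReal.toReal_mul, ha, hd]
    ring
  have hNm : ((μ.prod μ) {ω : Ω × Ω | (X ω.1 - X ω.2) * (Y ω.1 - Y ω.2) < 0}).toReal
      = 2 * (b * c) := by
    rw [hNeg, measure_union hdisj2 (m01.prod m10), Measure.prod_prod, Measure.prod_prod,
      ENNReal.toReal_add (by finiteness) (by finiteness), ENNReal.toReal_mul,
      ENNReal.toReal_mul, hb, hc]
    ring
  rw [hIX, hIY, hIXY, hVX, hVY, hPm, hNm]
  have hsqrt : Real.sqrt (p * (1 - p) * (q * (1 - q))) = Real.sqrt (p * (1 - p) * q * (1 - q)) := by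
    ring_nf
  rw [hsqrt]
  have hspos : 0 < Real.sqrt (p * (1 - p) * q * (1 - q)) :=
    Real.sqrt_pos.2 (mul_pos (mul_pos (mul_pos hp (by linarith)) hq) (by linarith))
  have hkey : 2 * (a * d) - 2 * (b * c) = 2 * (a - p * q) := by
    rw [← hab, ← hac]; linear_combination 2 * a * hsum
  rw [hkey]
  rw [mul_div_mul_left _ _ (two_ne_zero)]
end

section
/- Let X be a Σ_cx-smallest element of SB_d. Then the average pairwise Pearson correlation of X equals -1/(d-1) if d is even and -1/d if d is odd. -/
open Finset

/-! ### Auxiliary lemmas -/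

lemma card_val_lt (d k : ℕ) (hk : k ≤ d) :
    ((univ : Finset (Fin d)).filter (fun i : Fin d => (i : ℕ) < k)).card = k := by
  have h : ((univ : Finset (Fin d)).filter (fun i : Fin d => (i : ℕ) < k)).card
      = (Finset.range k).card := by
    refine Finset.card_bij' (fun (i : Fin d) _ => (i : ℕ))
      (fun m hm => (⟨m, lt_of_lt_of_le (Finset.mem_range.mp hm) hk⟩ : Fin d))
      ?_ ?_ ?_ ?_
    · intro a ha
      rw [Finset.mem_range]
      exact (Finset.mem_filter.mp ha).2
    · intro m hm
      simp only [Finset.mem_filter, Finset.mem_univ, true_and]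
      exact Finset.mem_range.mp hm
    · intro a ha; simp
    · intro m hm; simp
  rw [h, Finset.card_range]

/-- counting pairs with both coordinates satisfying `P`. -/
lemma card_pairs {d : ℕ} (P : Fin d → Prop) [DecidablePred P] :
    2 * (univ.filter (fun p : Fin d × Fin d => p.1 < p.2 ∧ P p.1 ∧ P p.2)).card
      + (univ.filter (fun i => P i)).card
      = (univ.filter (fun i => P i)).card * (univ.filter (fun i => P i)).card := by
  set T := univ.filter (fun i => P i) with hT
  have hset : univ.filter (fun p : Fin d × Fin d => p.1 < p.2 ∧ P p.1 ∧ P p.2)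
      = (T ×ˢ T).filter (fun p => p.1 < p.2) := by
    ext p
    simp only [Finset.mem_filter, Finset.mem_univ, true_and, hT, Finset.mem_product]
    tauto
  rw [hset]
  have hswap : ((T ×ˢ T).filter (fun p => p.1 < p.2)).card
      = ((T ×ˢ T).filter (fun p => p.2 < p.1)).card := by
    apply Finset.card_bij' (fun (p : Fin d × Fin d) _ => p.swap)
      (fun (p : Fin d × Fin d) _ => p.swap)
    · intro p hp
      simp only [Finset.mem_filter, Finset.mem_product] at hp ⊢
      exact ⟨⟨hp.1.2, hp.1.1⟩, hp.2⟩
    · intro p hp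
      simp only [Finset.mem_filter, Finset.mem_product] at hp ⊢
      exact ⟨⟨hp.1.2, hp.1.1⟩, hp.2⟩
    · intro p hp; simp
    · intro p hp; simp
  have hsplit : (T ×ˢ T).filter (fun p => ¬ p.1 < p.2)
      = ((T ×ˢ T).filter (fun p => p.2 < p.1)) ∪ ((T ×ˢ T).filter (fun p => p.1 = p.2)) := by
    ext p
    simp only [Finset.mem_filter, Finset.mem_union, not_lt]
    constructor
    · rintro ⟨hp, hle⟩
      rcases lt_or_eq_of_le hle with h | h
      · exact Or.inl ⟨hp, h⟩
      · exact Or.inr ⟨hp, h.symm⟩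
    · rintro (⟨hp, h⟩ | ⟨hp, h⟩)
      · exact ⟨hp, le_of_lt h⟩
      · exact ⟨hp, le_of_eq h.symm⟩
  have hdisj : Disjoint ((T ×ˢ T).filter (fun p : Fin d × Fin d => p.2 < p.1))
      ((T ×ˢ T).filter (fun p => p.1 = p.2)) := by
    rw [Finset.disjoint_filter]
    intro p _ hlt heq
    exact hlt.ne' heq
  have hdiag : ((T ×ˢ T).filter (fun p => p.1 = p.2)).card = T.card := by
    apply Finset.card_bij' (fun (p : Fin d × Fin d) _ => p.1) (fun i _ => (i, i))
    · intro p hp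
      exact (Finset.mem_product.mp (Finset.mem_filter.mp hp).1).1
    · intro i hi
      simp only [Finset.mem_filter, Finset.mem_product]
      exact ⟨⟨hi, hi⟩, trivial⟩
    · intro p hp
      have h2 := (Finset.mem_filter.mp hp).2
      exact Prod.ext rfl h2
    · intro i hi; rfl
  have htot := Finset.card_filter_add_card_filter_not
    (s := T ×ˢ T) (p := fun p : Fin d × Fin d => p.1 < p.2)
  rw [Finset.card_product] at htot
  rw [hsplit, Finset.card_union_of_disjoint hdisj, hdiag, ← hswap] at htot
  omega

/-- The cyclic-shift vector: ones in positions `j, j+1, …, j+k-1` (mod `d`). -/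
def shiftVec (d k : ℕ) (j : Fin d) : Fin d → Bool := fun h =>
  decide (((h - j : Fin d) : ℕ) < k)

lemma sumC_shiftVec (d k : ℕ) [NeZero d] (hk : k ≤ d) (j : Fin d) :
    sumC (shiftVec d k j) = k := by
  unfold sumC shiftVec
  have h : ((univ : Finset (Fin d)).filter
        (fun h => decide (((h - j : Fin d) : ℕ) < k) = true)).card
      = ((univ : Finset (Fin d)).filter (fun i : Fin d => (i : ℕ) < k)).card := by
    apply Finset.card_bij' (fun (h : Fin d) _ => h - j) (fun (i : Fin d) _ => i + j)
    · intro h hh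
      simp only [Finset.mem_filter, Finset.mem_univ, true_and, decide_eq_true_eq] at hh ⊢
      exact hh
    · intro i hi
      simp only [Finset.mem_filter, Finset.mem_univ, true_and, decide_eq_true_eq] at hi ⊢
      rwa [add_sub_cancel_right]
    · intro h _; exact sub_add_cancel h j
    · intro i _; exact add_sub_cancel_right i j
  rw [h, card_val_lt d k hk]

lemma count_shiftVec (d k : ℕ) [NeZero d] (hk : k ≤ d) (h : Fin d) :
    ((univ : Finset (Fin d)).filter (fun j => shiftVec d k j h = true)).card = k := by
  unfold shiftVec
  have heq : ((univ : Finset (Fin d)).filter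
        (fun j => decide (((h - j : Fin d) : ℕ) < k) = true)).card
      = ((univ : Finset (Fin d)).filter (fun i : Fin d => (i : ℕ) < k)).card := by
    apply Finset.card_bij' (fun (j : Fin d) _ => h - j) (fun (i : Fin d) _ => h - i)
    · intro j hj
      simp only [Finset.mem_filter, Finset.mem_univ, true_and, decide_eq_true_eq] at hj ⊢
      exact hj
    · intro i hi
      simp only [Finset.mem_filter, Finset.mem_univ, true_and, decide_eq_true_eq] at hi ⊢
      rwa [sub_sub_cancel]
    · intro j _; exact sub_sub_cancel h j
    · intro i _; exact sub_sub_cancel h i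
  rw [heq, card_val_lt d k hk]

/-- The witness distribution: uniform mixture of cyclic shifts of blocks of
lengths `⌊d/2⌋` and `⌈d/2⌉`. -/
noncomputable def witG (d : ℕ) : (Fin d → Bool) → ℝ := fun x =>
  (1 / (2 * d)) * ∑ j : Fin d,
    ((if x = shiftVec d (d / 2) j then (1 : ℝ) else 0)
      + (if x = shiftVec d (d - d / 2) j then (1 : ℝ) else 0))

lemma sum_ind (d : ℕ) (v : Fin d → Bool) (c : (Fin d → Bool) → ℝ) :
    ∑ x : Fin d → Bool, (if x = v then (1 : ℝ) else 0) * c x = c v := by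
  rw [Finset.sum_eq_single v]
  · simp
  · intro b _ hb; simp [hb]
  · intro hv; exact absurd (Finset.mem_univ v) hv

lemma witG_sum (d : ℕ) (hd : 2 ≤ d) (c : (Fin d → Bool) → ℝ) :
    ∑ x, witG d x * c x
      = (1 / (2 * d)) * ∑ j : Fin d,
          (c (shiftVec d (d / 2) j) + c (shiftVec d (d - d / 2) j)) := by
  unfold witG
  have : ∀ x, ((1 / (2 * (d:ℝ))) * ∑ j : Fin d,
      ((if x = shiftVec d (d / 2) j then (1 : ℝ) else 0)
        + (if x = shiftVec d (d - d / 2) j then (1 : ℝ) else 0))) * c x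
      = (1 / (2 * (d:ℝ))) * ∑ j : Fin d,
        ((if x = shiftVec d (d / 2) j then (1 : ℝ) else 0) * c x
          + (if x = shiftVec d (d - d / 2) j then (1 : ℝ) else 0) * c x) := by
    intro x
    rw [mul_assoc, Finset.sum_mul]
    congr 1
    apply Finset.sum_congr rfl
    intro j _
    ring
  simp only [this]
  rw [← Finset.mul_sum, Finset.sum_comm]
  congr 1
  apply Finset.sum_congr rfl
  intro j _
  rw [Finset.sum_add_distrib, sum_ind, sum_ind]

lemma isSB_witG (d : ℕ) (hd : 2 ≤ d) : isSB d (witG d) := by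
  have hd0 : (0:ℝ) < d := by positivity
  haveI : NeZero d := ⟨by omega⟩
  refine ⟨?_, ?_, ?_⟩
  · intro x
    unfold witG
    apply mul_nonneg
    · positivity
    · apply Finset.sum_nonneg
      intro j _
      apply add_nonneg <;> split <;> norm_num
  · have := witG_sum d hd (fun _ => (1:ℝ))
    simp only [mul_one] at this
    rw [this]
    simp only [Finset.sum_const, Finset.card_univ, Fintype.card_fin, nsmul_eq_mul]
    push_cast
    field_simp
    ring
  · intro h
    have hrw : ∑ x ∈ univ.filter (fun x => x h = true), witG d x
        = ∑ x, witG d x * (if x h = true then (1:ℝ) else 0) := by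
      rw [Finset.sum_filter]
      apply Finset.sum_congr rfl
      intro x _
      split <;> simp_all
    rw [hrw, witG_sum d hd]
    have h1 : ∑ j : Fin d, ((if shiftVec d (d / 2) j h = true then (1:ℝ) else 0)
        + (if shiftVec d (d - d / 2) j h = true then (1:ℝ) else 0))
        = (d / 2 : ℕ) + ((d - d / 2 : ℕ) : ℝ) := by
      rw [Finset.sum_add_distrib]
      congr 1
      · rw [Finset.sum_boole, count_shiftVec d (d/2) (Nat.div_le_self d 2) h]
      · rw [Finset.sum_boole, count_shiftVec d (d - d/2) (Nat.sub_le d (d/2)) h]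
    rw [h1]
    have h2 : ((d / 2 : ℕ) : ℝ) + ((d - d / 2 : ℕ) : ℝ) = d := by
      rw [← Nat.cast_add]
      congr 1
      omega
    rw [h2]
    field_simp

lemma witG_expect (d : ℕ) (hd : 2 ≤ d) (φ : ℝ → ℝ) :
    ∑ x, witG d x * φ (sumC x)
      = (φ ((d / 2 : ℕ) : ℝ) + φ (((d - d / 2 : ℕ) : ℕ) : ℝ)) / 2 := by
  have hd0 : (0:ℝ) < d := by positivity
  haveI : NeZero d := ⟨by omega⟩
  rw [witG_sum d hd (fun x => φ (sumC x))]
  have : ∀ j : Fin d, φ ((sumC (shiftVec d (d / 2) j) : ℕ) : ℝ)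
      + φ ((sumC (shiftVec d (d - d / 2) j) : ℕ) : ℝ)
      = φ ((d / 2 : ℕ) : ℝ) + φ (((d - d / 2 : ℕ) : ℕ) : ℝ) := by
    intro j
    rw [sumC_shiftVec d (d/2) (Nat.div_le_self d 2) j,
      sumC_shiftVec d (d - d/2) (Nat.sub_le d (d/2)) j]
  simp only [this]
  rw [Finset.sum_const, Finset.card_univ, Fintype.card_fin, nsmul_eq_mul]
  field_simp

lemma convexOn_sq_shift (c : ℝ) : ConvexOn ℝ Set.univ (fun t => (t - c)^2) := by
  refine ⟨convex_univ, ?_⟩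
  intro x _ y _ a b ha hb hab
  simp only [smul_eq_mul]
  have hb' : b = 1 - a := by linarith
  subst hb'
  nlinarith [mul_nonneg (mul_nonneg ha hb) (sq_nonneg (x - y))]

lemma mean_isSB (d : ℕ) (f : (Fin d → Bool) → ℝ) (hf : isSB d f) :
    ∑ x, f x * ((sumC x : ℕ) : ℝ) = d / 2 := by
  have key : ∀ x : Fin d → Bool, ((sumC x : ℕ) : ℝ)
      = ∑ i : Fin d, (if x i = true then (1:ℝ) else 0) := by
    intro x
    rw [Finset.sum_boole]
    rfl
  have : ∀ x : Fin d → Bool, f x * ((sumC x : ℕ) : ℝ)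
      = ∑ i : Fin d, (if x i = true then f x else 0) := by
    intro x
    rw [key, Finset.mul_sum]
    apply Finset.sum_congr rfl
    intro i _
    split <;> simp
  simp only [this]
  rw [Finset.sum_comm]
  have : ∀ i : Fin d, ∑ x : Fin d → Bool, (if x i = true then f x else 0) = 1/2 := by
    intro i
    rw [← Finset.sum_filter]
    exact hf.2.2 i
  simp only [this]
  rw [Finset.sum_const, Finset.card_univ, Fintype.card_fin, nsmul_eq_mul]
  ring

lemma pairsum (d : ℕ) (f : (Fin d → Bool) → ℝ) :
    ∑ p ∈ univ.filter (fun p : Fin d × Fin d => p.1 < p.2),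
        ∑ x ∈ univ.filter (fun x => x p.1 = true ∧ x p.2 = true), f x
      = ∑ x : Fin d → Bool,
          f x * (((sumC x : ℕ) : ℝ) ^ 2 - ((sumC x : ℕ) : ℝ)) / 2 := by
  have step1 : ∀ p : Fin d × Fin d,
      ∑ x ∈ univ.filter (fun x => x p.1 = true ∧ x p.2 = true), f x
        = ∑ x : Fin d → Bool, (if x p.1 = true ∧ x p.2 = true then f x else 0) := by
    intro p
    rw [Finset.sum_filter]
  rw [Finset.sum_congr rfl (fun p _ => step1 p), Finset.sum_comm]
  apply Finset.sum_congr rfl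
  intro x _
  rw [← Finset.sum_filter, Finset.filter_filter, Finset.sum_const]
  have hc := card_pairs (fun i : Fin d => x i = true)
  have hcard : ((univ.filter
      (fun p : Fin d × Fin d => p.1 < p.2 ∧ x p.1 = true ∧ x p.2 = true)).card : ℝ)
      = (((sumC x : ℕ) : ℝ) ^ 2 - ((sumC x : ℕ) : ℝ)) / 2 := by
    have hs : (univ.filter (fun i : Fin d => x i = true)).card = sumC x := rfl
    rw [hs] at hc
    have := congrArg (fun n : ℕ => (n : ℝ)) hc
    push_cast at this
    nlinarith [this]
  rw [nsmul_eq_mul, hcard]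
  ring

set_option maxHeartbeats 1000000 in
/-- the average pairwise Pearson correlation of a Σ_cx-smallest element
of SB_d equals -1/(d-1) if d is even and -1/d if d is odd. -/
theorem stmt_12 (d : ℕ) (hd : 2 ≤ d) (f : (Fin d → Bool) → ℝ)
    (hf : SigmaCxSmallest d f) :
    (Even d →
      (2 / ((d : ℝ) * ((d : ℝ) - 1))) *
          ∑ p ∈ univ.filter (fun p : Fin d × Fin d => p.1 < p.2),
            (4 * (∑ x ∈ univ.filter (fun x => x p.1 = true ∧ x p.2 = true), f x) - 1)
        = -1 / ((d : ℝ) - 1)) ∧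
    (Odd d →
      (2 / ((d : ℝ) * ((d : ℝ) - 1))) *
          ∑ p ∈ univ.filter (fun p : Fin d × Fin d => p.1 < p.2),
            (4 * (∑ x ∈ univ.filter (fun x => x p.1 = true ∧ x p.2 = true), f x) - 1)
        = -1 / (d : ℝ)) := by
  obtain ⟨hSB, hmin⟩ := hf
  have hd2 : (2:ℝ) ≤ (d:ℝ) := by exact_mod_cast hd
  have hdne : (d:ℝ) ≠ 0 := by linarith
  have hdne1 : (d:ℝ) - 1 ≠ 0 := by linarith
  haveI : NeZero d := ⟨by omega⟩
  set φ : ℝ → ℝ := fun t => (t - (d:ℝ)/2)^2 with hφ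
  have hconv : ConvexOn ℝ Set.univ φ := convexOn_sq_shift ((d:ℝ)/2)
  have hupper := hmin (witG d) (isSB_witG d hd) φ hconv
  rw [witG_expect d hd φ] at hupper
  have hM1 := mean_isSB d f hSB
  set M2 := ∑ x : Fin d → Bool, f x * ((sumC x : ℕ) : ℝ)^2 with hM2def
  have hexp : ∑ x : Fin d → Bool, f x * φ ((sumC x : ℕ) : ℝ) = M2 - (d:ℝ)^2/4 := by
    have hterm : ∀ x : Fin d → Bool, f x * φ ((sumC x : ℕ) : ℝ)
        = f x * ((sumC x : ℕ) : ℝ)^2 - (d:ℝ) * (f x * ((sumC x : ℕ) : ℝ))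
            + ((d:ℝ)^2/4) * f x := by
      intro x; simp only [hφ]; ring
    rw [Finset.sum_congr rfl (fun x _ => hterm x), Finset.sum_add_distrib,
      Finset.sum_sub_distrib, ← Finset.mul_sum, ← Finset.mul_sum, hM1, hSB.2.1]
    ring
  -- the sum over pairs, rewritten
  have hP : ∑ p ∈ univ.filter (fun p : Fin d × Fin d => p.1 < p.2),
      ∑ x ∈ univ.filter (fun x => x p.1 = true ∧ x p.2 = true), f x
      = (M2 - (d:ℝ)/2) / 2 := by
    rw [pairsum d f]
    have : ∀ x : Fin d → Bool,
        f x * (((sumC x : ℕ) : ℝ) ^ 2 - ((sumC x : ℕ) : ℝ)) / 2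
        = (f x * ((sumC x : ℕ) : ℝ)^2 - f x * ((sumC x : ℕ) : ℝ)) / 2 := by
      intro x; ring
    rw [Finset.sum_congr rfl (fun x _ => this x), ← Finset.sum_div,
      Finset.sum_sub_distrib, hM1]
  -- number of pairs
  have hCnat := card_pairs (fun _ : Fin d => True)
  have hfilt : (univ.filter
      (fun p : Fin d × Fin d => p.1 < p.2 ∧ True ∧ True))
      = univ.filter (fun p : Fin d × Fin d => p.1 < p.2) := by
    apply Finset.filter_congr; intro p _; simp
  have hfilt2 : (univ.filter (fun _ : Fin d => True)) = (univ : Finset (Fin d)) :=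
    Finset.filter_true_of_mem (fun _ _ => trivial)
  rw [hfilt, hfilt2, Finset.card_univ, Fintype.card_fin] at hCnat
  have hC : ((univ.filter (fun p : Fin d × Fin d => p.1 < p.2)).card : ℝ)
      = ((d:ℝ)^2 - (d:ℝ)) / 2 := by
    have := congrArg (fun n : ℕ => (n : ℝ)) hCnat
    push_cast at this
    nlinarith [this]
  -- split the sum in the goal
  have hsplit : ∑ p ∈ univ.filter (fun p : Fin d × Fin d => p.1 < p.2),
      (4 * (∑ x ∈ univ.filter (fun x => x p.1 = true ∧ x p.2 = true), f x) - 1)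
      = 4 * ((M2 - (d:ℝ)/2) / 2) - ((d:ℝ)^2 - (d:ℝ)) / 2 := by
    rw [Finset.sum_sub_distrib, ← Finset.mul_sum, hP, Finset.sum_const,
      nsmul_eq_mul, mul_one, hC]
  constructor
  · -- even case
    intro heven
    obtain ⟨m, hm⟩ := heven
    have hk1 : d / 2 = m := by omega
    have hk2 : d - d / 2 = m := by omega
    have hmr : ((m : ℕ) : ℝ) = (d:ℝ)/2 := by
      have : (d:ℝ) = (m:ℝ) + (m:ℝ) := by exact_mod_cast congrArg (fun n : ℕ => (n:ℝ)) hm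
      linarith
    rw [hk2, hk1, hmr] at hupper
    have hzero : φ ((d:ℝ)/2) = 0 := by simp [hφ]
    rw [hzero] at hupper
    norm_num at hupper
    have hlower : (0:ℝ) ≤ ∑ x : Fin d → Bool, f x * φ ((sumC x : ℕ) : ℝ) := by
      apply Finset.sum_nonneg
      intro x _
      exact mul_nonneg (hSB.1 x) (sq_nonneg _)
    have hM2 : M2 = (d:ℝ)^2/4 := by
      rw [hexp] at hupper hlower
      linarith
    rw [hsplit, hM2]
    field_simp
    ring
  · -- odd case
    intro hodd
    obtain ⟨m, hm⟩ := hodd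
    have hk1 : d / 2 = m := by omega
    have hk2 : d - d / 2 = m + 1 := by omega
    have hdr : (d:ℝ) = 2*(m:ℝ) + 1 := by exact_mod_cast congrArg (fun n : ℕ => (n:ℝ)) hm
    have hφ1 : φ ((m:ℕ) : ℝ) = 1/4 := by
      simp only [hφ]
      rw [hdr]
      ring
    have hφ2 : φ (((m + 1 : ℕ)) : ℝ) = 1/4 := by
      simp only [hφ]
      rw [hdr]
      push_cast
      ring
    rw [hk2, hk1, hφ1, hφ2] at hupper
    norm_num at hupper
    have hlower : (1:ℝ)/4 ≤ ∑ x : Fin d → Bool, f x * φ ((sumC x : ℕ) : ℝ) := by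
      have h14 : ∀ x : Fin d → Bool, f x * (1/4) ≤ f x * φ ((sumC x : ℕ) : ℝ) := by
        intro x
        apply mul_le_mul_of_nonneg_left _ (hSB.1 x)
        simp only [hφ]
        rcases le_or_gt (sumC x) m with h | h
        · have : ((sumC x : ℕ) : ℝ) ≤ (m:ℝ) := by exact_mod_cast h
          nlinarith [hdr]
        · have : ((m:ℝ)) + 1 ≤ ((sumC x : ℕ) : ℝ) := by exact_mod_cast h
          nlinarith [hdr]
      calc (1:ℝ)/4 = ∑ x : Fin d → Bool, f x * (1/4) := by
            rw [← Finset.sum_mul, hSB.2.1]; ring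
        _ ≤ _ := Finset.sum_le_sum (fun x _ => h14 x)
    have hM2 : M2 = (d:ℝ)^2/4 + 1/4 := by
      rw [hexp] at hupper hlower
      linarith
    rw [hsplit, hM2]
    field_simp
    ring
end

section
/- Let X be in SB_d, U standard uniform independent of X, and V = U X + (1-U)(1_d - X). Then for all j1 ≠ j2, the Pearson correlation ρ_P(V_{j1}, V_{j2}) equals ρ_P(X_{j1}, X_{j2}). -/
open MeasureTheory ProbabilityTheory

private lemma poly_int01 (a b c : ℝ) :
    ∫ x in (0:ℝ)..1, (a + b * x + c * x ^ 2) = a + b / 2 + c / 3 := by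
  have i1 : IntervalIntegrable (fun _ : ℝ => a) MeasureTheory.volume 0 1 :=
    intervalIntegrable_const
  have i2 : IntervalIntegrable (fun x : ℝ => b * x) MeasureTheory.volume 0 1 :=
    (continuous_const.mul continuous_id).intervalIntegrable _ _
  have i3 : IntervalIntegrable (fun x : ℝ => c * x ^ 2) MeasureTheory.volume 0 1 :=
    (continuous_const.mul (continuous_pow 2)).intervalIntegrable _ _
  rw [intervalIntegral.integral_add (i1.add i2) i3, intervalIntegral.integral_add i1 i2,
    intervalIntegral.integral_const, intervalIntegral.integral_const_mul,
    intervalIntegral.integral_const_mul, integral_id,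
    integral_pow]
  norm_num
  ring

/-- Pearson correlation of two real random variables. -/
noncomputable def pearson {Ω : Type*} [MeasurableSpace Ω] (μ : Measure Ω)
    (A B : Ω → ℝ) : ℝ :=
  ((∫ ω, A ω * B ω ∂μ) - (∫ ω, A ω ∂μ) * (∫ ω, B ω ∂μ))
    / Real.sqrt (variance A μ * variance B μ)

/-- for X symmetric Bernoulli, U standard uniform independent of X, and
V = U X + (1-U)(1_d - X), the Pearson correlation of (V_{j1}, V_{j2}) equals that of
(X_{j1}, X_{j2}) for all j1 ≠ j2. -/
theorem stmt_13 {Ω : Type*} [MeasurableSpace Ω] (μ : Measure Ω) [IsProbabilityMeasure μ]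
    (d : ℕ) (X : Ω → Fin d → ℝ) (U : Ω → ℝ)
    (hmX : Measurable X) (hmU : Measurable U)
    (hX01 : ∀ ω j, X ω j = 0 ∨ X ω j = 1)
    (hBer : ∀ j, μ {ω | X ω j = 1} = 1/2)
    (hU : Measure.map U μ = volume.restrict (Set.Icc (0:ℝ) 1))
    (hInd : IndepFun U X μ) :
    ∀ j1 j2 : Fin d, j1 ≠ j2 →
      pearson μ (fun ω => U ω * X ω j1 + (1 - U ω) * (1 - X ω j1))
          (fun ω => U ω * X ω j2 + (1 - U ω) * (1 - X ω j2))
        = pearson μ (fun ω => X ω j1) (fun ω => X ω j2) := by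
  intro j1 j2 _
  have hA : Measurable fun ω => X ω j1 := (measurable_pi_apply j1).comp hmX
  have hB : Measurable fun ω => X ω j2 := (measurable_pi_apply j2).comp hmX
  -- change of variables for functions of U
  have hUf : ∀ f : ℝ → ℝ, Measurable f →
      ∫ ω, f (U ω) ∂μ = ∫ x in (0:ℝ)..1, f x := by
    intro f hf
    rw [← integral_map hmU.aemeasurable hf.aestronglyMeasurable, hU,
      integral_Icc_eq_integral_Ioc, ← intervalIntegral.integral_of_le zero_le_one]
  have hUpoly : ∀ a b c : ℝ,
      ∫ ω, (a + b * U ω + c * U ω ^ 2) ∂μ = a + b / 2 + c / 3 := by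
    intro a b c
    rw [hUf (fun x => a + b * x + c * x ^ 2) (by fun_prop), poly_int01]
  -- U is in L²
  have hUm : MemLp U 2 μ := by
    have h1 : MemLp (id : ℝ → ℝ) 2 (Measure.map U μ) := by
      rw [hU]
      refine MemLp.of_bound aestronglyMeasurable_id 1 ?_
      filter_upwards [ae_restrict_mem measurableSet_Icc] with x hx
      simp only [id_eq, Real.norm_eq_abs, abs_le]
      exact ⟨by linarith [hx.1], hx.2⟩
    exact (memLp_map_measure_iff aestronglyMeasurable_id hmU.aemeasurable).1 h1
  have iU : Integrable U μ := hUm.integrable one_le_two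
  have iU2 : Integrable (fun ω => U ω ^ 2) μ := hUm.integrable_sq
  have ipoly : ∀ a b c : ℝ, Integrable (fun ω => a + b * U ω + c * U ω ^ 2) μ :=
    fun a b c => ((integrable_const a).add (iU.const_mul b)).add (iU2.const_mul c)
  -- integrability with a bounded factor on the right
  have ibdd : ∀ (f g : Ω → ℝ) (C : ℝ), Integrable f μ → AEStronglyMeasurable g μ →
      (∀ ω, ‖g ω‖ ≤ C) → Integrable (fun ω => f ω * g ω) μ := by
    intro f g C hf hg hb
    have := hf.bdd_mul hg (Filter.Eventually.of_forall hb)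
    simpa [mul_comm] using this
  -- independence factorization
  have key : ∀ (f : ℝ → ℝ) (g : (Fin d → ℝ) → ℝ), Measurable f → Measurable g →
      ∫ ω, f (U ω) * g (X ω) ∂μ = (∫ ω, f (U ω) ∂μ) * ∫ ω, g (X ω) ∂μ := by
    intro f g hf hg
    exact (hInd.comp hf hg).integral_fun_mul_eq_mul_integral (hf.comp hmU).aestronglyMeasurable
      (hg.comp hmX).aestronglyMeasurable
  -- values of X are in [0,1]
  have hAb : ∀ ω, ‖X ω j1‖ ≤ 1 := by
    intro ω; rcases hX01 ω j1 with h | h <;> simp [h]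
  have hBb : ∀ ω, ‖X ω j2‖ ≤ 1 := by
    intro ω; rcases hX01 ω j2 with h | h <;> simp [h]
  -- expectation of a Bernoulli coordinate
  have hIX : ∀ j : Fin d, ∫ ω, X ω j ∂μ = 1 / 2 := by
    intro j
    have hmes : MeasurableSet {ω | X ω j = 1} :=
      ((measurable_pi_apply j).comp hmX) (measurableSet_singleton 1)
    have heq : (fun ω => X ω j) = Set.indicator {ω | X ω j = 1} (fun _ => (1:ℝ)) := by
      funext ω
      rcases hX01 ω j with h | h
      · rw [Set.indicator_apply, if_neg (by simp [Set.mem_setOf_eq, h]), h]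
      · rw [Set.indicator_apply, if_pos (by simpa [Set.mem_setOf_eq] using h), h]
    rw [heq, integral_indicator_const _ hmes, measureReal_def, hBer j]
    simp [ENNReal.toReal_div]
  have hIA : ∫ ω, X ω j1 ∂μ = 1 / 2 := hIX j1
  have hIB : ∫ ω, X ω j2 ∂μ = 1 / 2 := hIX j2
  -- Memℒp of the various functions
  have hAm : MemLp (fun ω => X ω j1) 2 μ :=
    MemLp.of_bound hA.aestronglyMeasurable 1 (Filter.Eventually.of_forall hAb)
  have hBm : MemLp (fun ω => X ω j2) 2 μ :=
    MemLp.of_bound hB.aestronglyMeasurable 1 (Filter.Eventually.of_forall hBb)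
  -- means of V
  have hV : ∀ j : Fin d,
      ∫ ω, (U ω * X ω j + (1 - U ω) * (1 - X ω j)) ∂μ = 1 / 2 := by
    intro j
    have hXj : Measurable fun ω => X ω j := (measurable_pi_apply j).comp hmX
    have hXjb : ∀ ω, ‖X ω j‖ ≤ 1 := by
      intro ω; rcases hX01 ω j with h | h <;> simp [h]
    have e : (fun ω => U ω * X ω j + (1 - U ω) * (1 - X ω j))
        = fun ω => (1 + (-1) * U ω + 0 * U ω ^ 2) + (-1 + 2 * U ω + 0 * U ω ^ 2) * X ω j := by
      funext ω; ring
    rw [e, integral_add (ipoly 1 (-1) 0)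
      (ibdd _ _ 1 (ipoly (-1) 2 0) hXj.aestronglyMeasurable hXjb)]
    have fact := key (fun u => -1 + 2 * u + 0 * u ^ 2) (fun x => x j)
      (by fun_prop) (by fun_prop)
    rw [fact, hUpoly, hUpoly, hIX j]
    norm_num
  -- second moment of V
  have hV2 : ∀ j : Fin d,
      ∫ ω, (U ω * X ω j + (1 - U ω) * (1 - X ω j)) ^ 2 ∂μ = 1 / 3 := by
    intro j
    have hXj : Measurable fun ω => X ω j := (measurable_pi_apply j).comp hmX
    have hXjb : ∀ ω, ‖X ω j‖ ≤ 1 := by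
      intro ω; rcases hX01 ω j with h | h <;> simp [h]
    have e : (fun ω => (U ω * X ω j + (1 - U ω) * (1 - X ω j)) ^ 2)
        = fun ω => (1 + (-2) * U ω + 1 * U ω ^ 2) + (-1 + 2 * U ω + 0 * U ω ^ 2) * X ω j := by
      funext ω
      rcases hX01 ω j with h | h <;> rw [h] <;> ring
    rw [e, integral_add (ipoly 1 (-2) 1)
      (ibdd _ _ 1 (ipoly (-1) 2 0) hXj.aestronglyMeasurable hXjb)]
    have fact := key (fun u => -1 + 2 * u + 0 * u ^ 2) (fun x => x j)
      (by fun_prop) (by fun_prop)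
    rw [fact, hUpoly, hUpoly, hIX j]
    norm_num
  -- Memℒp of V
  have hVm : ∀ j : Fin d,
      MemLp (fun ω => U ω * X ω j + (1 - U ω) * (1 - X ω j)) 2 μ := by
    intro j
    have hXj : Measurable fun ω => X ω j := (measurable_pi_apply j).comp hmX
    have hXjb : ∀ ω, ‖X ω j‖ ≤ 1 := by
      intro ω; rcases hX01 ω j with h | h <;> simp [h]
    have h1 : MemLp (fun ω => 1 - U ω) 2 μ := (memLp_const (1:ℝ)).sub hUm
    have h2 : MemLp (fun ω => 2 * U ω - 1) 2 μ := (hUm.const_mul 2).sub (memLp_const (1:ℝ))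
    have h3 : MemLp (fun ω => (2 * U ω - 1) * X ω j) 2 μ := by
      refine h2.of_le (((hmU.const_mul 2).sub measurable_const).mul hXj).aestronglyMeasurable
        (Filter.Eventually.of_forall fun ω => ?_)
      calc ‖(2 * U ω - 1) * X ω j‖ = ‖2 * U ω - 1‖ * ‖X ω j‖ := norm_mul _ _
        _ ≤ ‖2 * U ω - 1‖ * 1 := by
            exact mul_le_mul_of_nonneg_left (hXjb ω) (norm_nonneg _)
        _ = ‖2 * U ω - 1‖ := mul_one _
    have e : (fun ω => U ω * X ω j + (1 - U ω) * (1 - X ω j))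
        = fun ω => (1 - U ω) + (2 * U ω - 1) * X ω j := by
      funext ω; ring
    rw [e]
    exact h1.add h3
  -- variance of V
  have hVarV : ∀ j : Fin d,
      variance (fun ω => U ω * X ω j + (1 - U ω) * (1 - X ω j)) μ = 1 / 12 := by
    intro j
    rw [variance_eq_sub (hVm j)]
    have : ∫ ω, ((fun ω => U ω * X ω j + (1 - U ω) * (1 - X ω j)) ^ 2) ω ∂μ
        = ∫ ω, (U ω * X ω j + (1 - U ω) * (1 - X ω j)) ^ 2 ∂μ := by
      simp [Pi.pow_apply]
    rw [this, hV2 j, hV j]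
    norm_num
  -- variance of X coordinates
  have hVarX : ∀ j : Fin d, variance (fun ω => X ω j) μ = 1 / 4 := by
    intro j
    have hXjm : MemLp (fun ω => X ω j) 2 μ := by
      refine MemLp.of_bound ((measurable_pi_apply j).comp hmX).aestronglyMeasurable 1
        (Filter.Eventually.of_forall fun ω => ?_)
      rcases hX01 ω j with h | h <;> simp [h]
    rw [variance_eq_sub hXjm]
    have e : ∫ ω, ((fun ω => X ω j) ^ 2) ω ∂μ = ∫ ω, X ω j ∂μ := by
      apply integral_congr_ae
      filter_upwards with ω
      rcases hX01 ω j with h | h <;> simp [Pi.pow_apply, h]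
    rw [e, hIX j]
    norm_num
  -- cross moment of X
  set p : ℝ := ∫ ω, X ω j1 * X ω j2 ∂μ with hp
  -- cross moment of V
  have hVV : ∫ ω, (U ω * X ω j1 + (1 - U ω) * (1 - X ω j1))
      * (U ω * X ω j2 + (1 - U ω) * (1 - X ω j2)) ∂μ = 1 / 6 + p / 3 := by
    have e : (fun ω => (U ω * X ω j1 + (1 - U ω) * (1 - X ω j1))
        * (U ω * X ω j2 + (1 - U ω) * (1 - X ω j2)))
        = fun ω => (1 + (-2) * U ω + 1 * U ω ^ 2)
          + ((-1 + 3 * U ω + (-2) * U ω ^ 2) * (X ω j1 + X ω j2)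
          + (1 + (-4) * U ω + 4 * U ω ^ 2) * (X ω j1 * X ω j2)) := by
      funext ω; ring
    have hABb : ∀ ω, ‖X ω j1 + X ω j2‖ ≤ 2 := by
      intro ω
      calc ‖X ω j1 + X ω j2‖ ≤ ‖X ω j1‖ + ‖X ω j2‖ := norm_add_le _ _
        _ ≤ 1 + 1 := add_le_add (hAb ω) (hBb ω)
        _ = 2 := by norm_num
    have hABm : ∀ ω, ‖X ω j1 * X ω j2‖ ≤ 1 := by
      intro ω
      calc ‖X ω j1 * X ω j2‖ = ‖X ω j1‖ * ‖X ω j2‖ := norm_mul _ _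
        _ ≤ 1 * 1 := mul_le_mul (hAb ω) (hBb ω) (norm_nonneg _) zero_le_one
        _ = 1 := one_mul _
    have int2 : Integrable (fun ω => (-1 + 3 * U ω + (-2) * U ω ^ 2) * (X ω j1 + X ω j2)) μ :=
      ibdd _ _ 2 (ipoly (-1) 3 (-2)) (hA.add hB).aestronglyMeasurable hABb
    have int3 : Integrable (fun ω => (1 + (-4) * U ω + 4 * U ω ^ 2) * (X ω j1 * X ω j2)) μ :=
      ibdd _ _ 1 (ipoly 1 (-4) 4) (hA.mul hB).aestronglyMeasurable hABm
    have int23 : Integrable (fun ω => (-1 + 3 * U ω + (-2) * U ω ^ 2) * (X ω j1 + X ω j2)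
        + (1 + (-4) * U ω + 4 * U ω ^ 2) * (X ω j1 * X ω j2)) μ := int2.add int3
    rw [e, integral_add (ipoly 1 (-2) 1) int23, integral_add int2 int3]
    have fact2 := key (fun u => -1 + 3 * u + (-2) * u ^ 2) (fun x => x j1 + x j2)
      (by fun_prop) (by fun_prop)
    have fact3 := key (fun u => 1 + (-4) * u + 4 * u ^ 2) (fun x => x j1 * x j2)
      (by fun_prop) (by fun_prop)
    have hsum : ∫ ω, (X ω j1 + X ω j2) ∂μ = 1 := by
      rw [integral_add (hAm.integrable one_le_two) (hBm.integrable one_le_two), hIA, hIB]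
      norm_num
    rw [fact2, fact3, hUpoly, hUpoly, hUpoly, hsum, ← hp]
    ring
  -- put everything together
  unfold pearson
  rw [hVV, hV j1, hV j2, hVarV j1, hVarV j2, hIA, hIB, hVarX j1, hVarX j2, ← hp]
  rw [show (1/12 : ℝ) * (1/12) = (1/12)^2 by norm_num,
    show (1/4 : ℝ) * (1/4) = (1/4)^2 by norm_num,
    Real.sqrt_sq (by norm_num : (0:ℝ) ≤ 1/12), Real.sqrt_sq (by norm_num : (0:ℝ) ≤ 1/4)]
  field_simp
  ring
end

section
/- For d odd, define M_d = (d-1)/2, m_d = (d+1)/2, and let I*_{d-1} be the set of binary vectors i in {0,1}^{d-1} whose components sum to M_d or m_d. Let A_d be the matrix whose columns are indexed by i ∈ I*_{d-1}, with rows: R_1 the indicator of Σ i_h = M_d, R_2 the indicator of Σ i_h = m_d, followed by the d-1 rows (i_j)_{i ∈ I*_{d-1}} for j = 1,...,d-1. Then rank(A_d) = d for all odd d ≥ 3. -/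
open Finset Matrix

def nOnes {n : ℕ} (i : Fin n → Bool) : ℕ :=
  (univ.filter (fun j => i j = true)).card

lemma nOnes_decide {n : ℕ} (S : Finset (Fin n)) :
    nOnes (fun j => decide (j ∈ S)) = S.card := by
  unfold nOnes
  simp [Finset.filter_univ_mem]

lemma aux (M m a b : ℕ) (hm : m = 2 * M) (ha : a = M) (hb : b = M + 1) (hM : 1 ≤ M) :
    Matrix.rank
      (Matrix.of (fun (r : Fin 2 ⊕ Fin m)
          (c : {i : Fin m → Bool // nOnes i = a ∨ nOnes i = b}) =>
        Sum.elim
          (fun k : Fin 2 =>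
            if k = 0 then (if nOnes c.val = a then (1 : ℚ) else 0)
            else (if nOnes c.val = b then (1 : ℚ) else 0))
          (fun j : Fin m => if c.val j then (1 : ℚ) else 0) r)) = m + 1 := by
  subst ha hb hm
  set A := (Matrix.of (fun (r : Fin 2 ⊕ Fin (2*a))
          (c : {i : Fin (2*a) → Bool // nOnes i = a ∨ nOnes i = a + 1}) =>
        Sum.elim
          (fun k : Fin 2 =>
            if k = 0 then (if nOnes c.val = a then (1 : ℚ) else 0)
            else (if nOnes c.val = a + 1 then (1 : ℚ) else 0))
          (fun j : Fin (2*a) => if c.val j then (1 : ℚ) else 0) r)) with hA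
  rw [← Matrix.rank_transpose, Matrix.rank]
  -- evaluation of the row-combination map
  have hev : ∀ (w : (Fin 2 ⊕ Fin (2*a)) → ℚ)
      (c : {i : Fin (2*a) → Bool // nOnes i = a ∨ nOnes i = a + 1}),
      Aᵀ.mulVecLin w c = (if nOnes c.val = a then w (Sum.inl 0) else 0)
        + (if nOnes c.val = a+1 then w (Sum.inl 1) else 0)
        + ∑ j ∈ Finset.univ.filter (fun j => c.val j = true), w (Sum.inr j) := by
    intro w c
    simp only [Matrix.mulVecLin_apply, Matrix.mulVec, Matrix.transpose_apply, hA,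
      Matrix.of_apply, dotProduct, Fintype.sum_sum_type, Fin.sum_univ_two,
      Sum.elim_inl, Sum.elim_inr]
    rw [Finset.sum_filter]
    norm_num [ite_mul]
  have hmem : ∀ (w : (Fin 2 ⊕ Fin (2*a)) → ℚ),
      w ∈ LinearMap.ker Aᵀ.mulVecLin ↔ ∀ c, Aᵀ.mulVecLin w c = 0 := by
    intro w
    rw [LinearMap.mem_ker, funext_iff]
    simp
  -- a column from a subset of the right size
  have hcol : ∀ (w : (Fin 2 ⊕ Fin (2*a)) → ℚ), w ∈ LinearMap.ker Aᵀ.mulVecLin →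
      ∀ (S : Finset (Fin (2*a))) (h : S.card = a ∨ S.card = a + 1),
      (if S.card = a then w (Sum.inl 0) else 0)
        + (if S.card = a+1 then w (Sum.inl 1) else 0)
        + ∑ j ∈ S, w (Sum.inr j) = 0 := by
    intro w hw S h
    have h0 := (hmem w).1 hw ⟨fun j => decide (j ∈ S), by rw [nOnes_decide]; exact h⟩
    rw [hev] at h0
    simpa [nOnes_decide, Finset.filter_univ_mem] using h0
  -- the relation vector
  set v : (Fin 2 ⊕ Fin (2*a)) → ℚ :=
    Sum.elim (fun k => if k = 0 then (a : ℚ) else (a+1 : ℚ)) (fun _ => -1) with hv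
  have hMne : a ≠ a + 1 := by omega
  have hvker : v ∈ LinearMap.ker Aᵀ.mulVecLin := by
    rw [hmem]
    intro c
    rw [hev]
    have hcard : ((Finset.univ.filter (fun j => c.val j = true)).card : ℚ) = nOnes c.val := by
      rw [nOnes]
    rcases c.prop with h | h <;>
      simp [hv, h, hMne, Finset.sum_const, hcard, Ne.symm hMne] <;> push_cast <;> linarith [hcard]
  have j0 : Fin (2*a) := ⟨0, by omega⟩
  -- kernel is the span of v
  have hker : LinearMap.ker Aᵀ.mulVecLin = Submodule.span ℚ {v} := by
    apply le_antisymm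
    · intro w hw
      -- coordinates of w on the Fin (2*a) part are all equal
      have hconst : ∀ j k : Fin (2*a), w (Sum.inr j) = w (Sum.inr k) := by
        intro j k
        rcases eq_or_ne j k with rfl | hjk
        · rfl
        · obtain ⟨S₀, hS₀sub, hS₀card⟩ :=
            Finset.exists_subset_card_eq
              (show a - 1 ≤ (Finset.univ \ {j, k}).card by
                rw [Finset.card_sdiff_of_subset (by simp)]
                simp [Finset.card_insert_of_notMem, hjk, Finset.card_fin]
                omega)
          have hj : j ∉ S₀ := fun hj => by
            have := hS₀sub hj; simp at this
          have hk : k ∉ S₀ := fun hk => by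
            have := hS₀sub hk; simp at this
          have hcj : (insert j S₀).card = a := by
            rw [Finset.card_insert_of_notMem hj, hS₀card]; omega
          have hck : (insert k S₀).card = a := by
            rw [Finset.card_insert_of_notMem hk, hS₀card]; omega
          have e1 := hcol w hw (insert j S₀) (Or.inl hcj)
          have e2 := hcol w hw (insert k S₀) (Or.inl hck)
          rw [Finset.sum_insert hj] at e1
          rw [Finset.sum_insert hk] at e2
          simp only [hcj, hck, if_pos, hMne, if_neg] at e1 e2
          linarith
      set c0 := w (Sum.inr j0) with hc0
      have hsum : ∀ (S : Finset (Fin (2*a))), ∑ j ∈ S, w (Sum.inr j) = S.card * c0 := by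
        intro S
        rw [Finset.sum_congr rfl (fun j _ => hconst j j0), Finset.sum_const]
        simp [mul_comm, ← hc0]
      obtain ⟨S₁, -, hS₁⟩ := Finset.exists_subset_card_eq
        (show a ≤ (Finset.univ : Finset (Fin (2*a))).card by simp; omega)
      obtain ⟨S₂, -, hS₂⟩ := Finset.exists_subset_card_eq
        (show a + 1 ≤ (Finset.univ : Finset (Fin (2*a))).card by simp; omega)
      have e1 := hcol w hw S₁ (Or.inl hS₁)
      have e2 := hcol w hw S₂ (Or.inr hS₂)
      rw [hsum, hS₁] at e1
      rw [hsum, hS₂] at e2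
      simp only [hS₁, hS₂, if_pos, hMne, Ne.symm hMne, if_neg] at e1 e2
      rw [Submodule.mem_span_singleton]
      refine ⟨-c0, ?_⟩
      funext r
      rcases r with k | j
      · fin_cases k <;> simp [hv] <;> push_cast at e1 e2 ⊢ <;> linarith
      · simp [hv, hconst j j0, ← hc0]
    · rw [Submodule.span_le, Set.singleton_subset_iff]
      exact hvker
  have hvne : v ≠ 0 := by
    intro h
    have := congrFun h (Sum.inr j0)
    simp [hv] at this
  have hrn := LinearMap.finrank_range_add_finrank_ker Aᵀ.mulVecLin
  rw [hker, finrank_span_singleton hvne, Module.finrank_fintype_fun_eq_card,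
    Fintype.card_sum, Fintype.card_fin, Fintype.card_fin] at hrn
  omega

/-- for odd d ≥ 3, the matrix A_d — with columns indexed by the binary
vectors i ∈ {0,1}^{d-1} whose components sum to M_d = (d-1)/2 or m_d = (d+1)/2, and
rows given by the indicator of Σ i_h = M_d, the indicator of Σ i_h = m_d, and the
d-1 coordinate rows (i_j) — has rank d over ℚ. -/
theorem stmt_15 (d : ℕ) (hd : Odd d) (h3 : 3 ≤ d) :
    Matrix.rank
      (Matrix.of (fun (r : Fin 2 ⊕ Fin (d - 1))
          (c : {i : Fin (d - 1) → Bool // nOnes i = (d - 1) / 2 ∨ nOnes i = (d + 1) / 2}) =>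
        Sum.elim
          (fun k : Fin 2 =>
            if k = 0 then (if nOnes c.val = (d - 1) / 2 then (1 : ℚ) else 0)
            else (if nOnes c.val = (d + 1) / 2 then (1 : ℚ) else 0))
          (fun j : Fin (d - 1) => if c.val j then (1 : ℚ) else 0) r)) = d := by
  obtain ⟨M, rfl⟩ := hd
  have h := aux M (2*M+1-1) ((2*M+1-1)/2) ((2*M+1+1)/2) (by omega) (by omega) (by omega)
    (by omega)
  rw [h]
  omega
end

section
/- The pmf f on {0,1}^5 defined by f((1,0,1,0,0)) = f((1,0,0,1,1)) = f((0,1,1,0,1)) = f((0,1,0,1,0)) = 1/4 (and 0 elsewhere) belongs to SB_5 and is a Σ_cx-smallest element of SB_5: its support lies in the set of binary vectors with component sum 2 or 3. -/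
open Finset

/-- The pmf on {0,1}^5 putting mass 1/4 on each of (1,0,1,0,0), (1,0,0,1,1),
(0,1,1,0,1), (0,1,0,1,0). -/
noncomputable def f5 : (Fin 5 → Bool) → ℝ := fun y =>
  if y = ![true, false, true, false, false] ∨ y = ![true, false, false, true, true] ∨
      y = ![false, true, true, false, true] ∨ y = ![false, true, false, true, false]
  then (1/4 : ℝ) else 0

def P5 (y : Fin 5 → Bool) : Prop :=
  y = ![true, false, true, false, false] ∨ y = ![true, false, false, true, true] ∨
      y = ![false, true, true, false, true] ∨ y = ![false, true, false, true, false]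

instance : DecidablePred P5 := fun y => by unfold P5; infer_instance

lemma f5_sum (s : Finset (Fin 5 → Bool)) :
    ∑ x ∈ s, f5 x = ((s.filter P5).card : ℝ) / 4 := by
  have : ∀ x, f5 x = if P5 x then (1/4 : ℝ) else 0 := fun x => rfl
  simp only [this]
  rw [← Finset.sum_filter, Finset.sum_const, nsmul_eq_mul]
  ring

/-- the pmf f5 belongs to SB_5 and is Σ_cx-smallest: its support is
contained in the binary vectors with component sum 2 or 3. -/
theorem stmt_18 :
    isSB 5 f5 ∧ ∀ y, f5 y ≠ 0 → sumC y = 2 ∨ sumC y = 3 := by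
  refine ⟨⟨?_, ?_, ?_⟩, ?_⟩
  · intro x
    unfold f5
    split <;> norm_num
  · rw [f5_sum]
    have : (univ.filter P5).card = 4 := by decide
    rw [this]; norm_num
  · intro h
    rw [f5_sum]
    have : ((univ.filter (fun x => x h = true)).filter P5).card = 2 := by
      revert h; decide
    rw [this]
    norm_num
  · intro y hy
    have hP : P5 y := by
      by_contra hc
      exact hy (if_neg hc)
    rcases hP with h | h | h | h <;> subst h <;> [left; right; right; left] <;> decide
end
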